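/- arXiv:1502.04477 — 4 statements merged into one kernel-verified Lean document; each statement's English description precedes it below -/
import Mathlib

section
/- For every natural number k with 0 ≤ k ≤ n−1, one has {k}! · {n−1−k}! = {n−1}!. -/
/-- The quantum number `{a} = ξ^a - ξ^{-a}` where `ξ = exp(πi/n)`. -/
noncomputable def qnum (n : ℕ) (a : ℂ) : ℂ :=
  Complex.exp (Real.pi * Complex.I * a / n) - Complex.exp (-(Real.pi * Complex.I * a) / n)


/-- The quantum factorial `{k}! = ∏_{j=1}^k {j}`. -/
noncomputable def qfact (n k : ℕ) : ℂ :=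
  ∏ j ∈ Finset.range k, qnum n (j + 1)

lemma qnum_symm (n : ℕ) (hn : n ≠ 0) (a : ℂ) : qnum n ((n : ℂ) - a) = qnum n a := by
  unfold qnum
  have hn' : (n : ℂ) ≠ 0 := by exact_mod_cast hn
  have h1 : (Real.pi * Complex.I * ((n : ℂ) - a) / n)
      = Real.pi * Complex.I + (-(Real.pi * Complex.I * a) / n) := by
    field_simp; ring
  have h2 : (-(Real.pi * Complex.I * ((n : ℂ) - a)) / n)
      = -(Real.pi * Complex.I) + (Real.pi * Complex.I * a / n) := by
    field_simp; ring
  have hneg : Complex.exp (-((Real.pi : ℂ) * Complex.I)) = -1 := by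
    rw [Complex.exp_neg, Complex.exp_pi_mul_I]; norm_num
  rw [h1, h2, Complex.exp_add, Complex.exp_add, Complex.exp_pi_mul_I, hneg]
  ring

/-- For `0 ≤ k ≤ n-1`, `{k}! ⬝ {n-1-k}! = {n-1}!`. -/
theorem qfact_mul_qfact_compl (n : ℕ) (hn : 2 ≤ n) (k : ℕ) (hk : k ≤ n - 1) :
    qfact n k * qfact n (n - 1 - k) = qfact n (n - 1) := by
  have hn0 : n ≠ 0 := by omega
  set M := n - 1 - k with hM
  have hsplit : n - 1 = k + M := by omega
  have : qfact n (n - 1) = qfact n k * ∏ i ∈ Finset.range M, qnum n ((k + i : ℕ) + 1) := by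
    rw [hsplit]; unfold qfact
    rw [Finset.prod_range_add]
  rw [this]
  congr 1
  unfold qfact
  rw [← Finset.prod_range_reflect (fun i => qnum n ((k + i : ℕ) + 1)) M]
  apply Finset.prod_congr rfl
  intro j hj
  simp only [Finset.mem_range] at hj
  have harg : ((k + (M - 1 - j) : ℕ) : ℂ) + 1 = (n : ℂ) - ((j : ℂ) + 1) := by
    have : (k + (M - 1 - j) : ℕ) + 1 + (j + 1) = n := by omega
    have := congrArg (Nat.cast : ℕ → ℂ) this
    push_cast at this ⊢
    linear_combination this
  rw [harg, qnum_symm n hn0]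
end

section
/- For every complex number f, writing f̄ := n−1−f, the quantum binomial satisfies [2f̄+n; 2f̄+1] = [2f+n; 2f+1]. (In both binomials the difference of the two entries equals n−1, so both are defined.) -/
/-- The quantum binomial `[a; a-k] = ∏_{j=0}^{k-1} {a-j}/{a-k-j}` (top entry `a`,
difference of the two entries the natural number `k`), an empty product being `1`. -/
noncomputable def qbinom (n : ℕ) (a : ℂ) (k : ℕ) : ℂ :=
  ∏ j ∈ Finset.range k, qnum n (a - j) / qnum n ((k : ℂ) - j)

lemma qnum_key (n : ℕ) (hn : n ≠ 0) (a : ℂ) :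
    qnum n (2 * n - a) = qnum n (a + n) := by
  have hn' : (n : ℂ) ≠ 0 := Nat.cast_ne_zero.mpr hn
  unfold qnum
  have h1 : (Real.pi : ℂ) * Complex.I * (2 * n - a) / n
      = 2 * Real.pi * Complex.I + -(Real.pi * Complex.I * a) / n := by
    field_simp; ring
  have h2 : -((Real.pi : ℂ) * Complex.I * (2 * n - a)) / n
      = -(2 * Real.pi * Complex.I) + Real.pi * Complex.I * a / n := by
    field_simp; ring
  have h3 : (Real.pi : ℂ) * Complex.I * (a + n) / n
      = Real.pi * Complex.I * a / n + Real.pi * Complex.I := by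
    field_simp
  have h4 : -((Real.pi : ℂ) * Complex.I * (a + n)) / n
      = -(Real.pi * Complex.I * a) / n + -(Real.pi * Complex.I) := by
    field_simp; ring
  rw [h1, h2, h3, h4]
  simp [Complex.exp_add, Complex.exp_neg, Complex.exp_two_pi_mul_I, Complex.exp_pi_mul_I]
  ring

/-- For every complex `f`, writing `f̄ = n-1-f`, one has
`[2f̄+n; 2f̄+1] = [2f+n; 2f+1]` (both binomials have difference of entries `n-1`). -/
theorem qbinom_bar_invariant (n : ℕ) (hn : 2 ≤ n) (f : ℂ) :
    qbinom n (2 * ((n : ℂ) - 1 - f) + n) (n - 1) = qbinom n (2 * f + n) (n - 1) := by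
  have hn0 : n ≠ 0 := by omega
  unfold qbinom
  rw [Finset.prod_div_distrib, Finset.prod_div_distrib]
  congr 1
  rw [← Finset.prod_range_reflect]
  apply Finset.prod_congr rfl
  intro j hj
  rw [Finset.mem_range] at hj
  have hc : ((n - 1 - 1 - j : ℕ) : ℂ) = (n : ℂ) - 2 - j := by
    have h : n - 1 - 1 - j = n - (2 + j) := by omega
    rw [h]
    push_cast [show 2 + j ≤ n by omega]
    ring
  rw [hc]
  have h := qnum_key n hn0 (2 * f - j)
  rw [show 2 * ((n : ℂ) - 1 - f) + n - ((n : ℂ) - 2 - j) = 2 * (n : ℂ) - (2 * f - j) by ring,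
    show 2 * f + (n : ℂ) - j = (2 * f - j) + n by ring]
  exact h
end

section
/- Let a, b, c, d, e, f be integers such that the four triples (a,b,c), (c,d,e), (a,e,f), (b,d,f) are admissible, set b̄ := n−1−b, s := max(0, n−1−2e, (d+f−b)−(d+e−c), (b+f−d)+(c+d−e)−(n−1)) and S := min(c+d−e, a+f−e, n−1−(a+e−f), n−1−(d+e−c)), and let z be an integer with s ≤ z ≤ S. Then [2c; a+b+c+1−n] · [(b+c−a)+(a+f−e)−z; b+c−a] · [(a+e−f)+z; a+c−b] = [2c; a+b̄+c+1−n] · [(b̄+c−a)+(a+f−e)−z; b̄+c−a] · [(a+e−f)+z; a+c−b̄]. -/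
/-- The quantum binomial `[a; b]` for integer entries. -/
noncomputable def qbinomZ (n : ℕ) (a b : ℤ) : ℂ :=
  qbinom n (a : ℂ) (a - b).toNat

/-- A triple of integers `(i,j,k)` is admissible. -/
def Admissible (n : ℕ) (i j k : ℤ) : Prop :=
  0 < i ∧ i < (n : ℤ) - 1 ∧ 0 < j ∧ j < (n : ℤ) - 1 ∧ 0 < k ∧ k < (n : ℤ) - 1 ∧
  (n : ℤ) - 1 < i + j + k ∧ i + j + k < 2 * ((n : ℤ) - 1) ∧
  0 < i + j - k ∧ i + j - k < (n : ℤ) - 1 ∧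
  0 < j + k - i ∧ j + k - i < (n : ℤ) - 1 ∧
  0 < k + i - j ∧ k + i - j < (n : ℤ) - 1

lemma qnum_reflect (n : ℕ) (hn : (n:ℂ) ≠ 0) (m : ℂ) :
    qnum n ((n:ℂ) - m) = qnum n m := by
  unfold qnum
  have h1 : (Real.pi:ℂ) * Complex.I * ((n:ℂ) - m) / n
      = (Real.pi:ℂ) * Complex.I + -((Real.pi:ℂ) * Complex.I * m / n) := by
    field_simp; ring
  have h2 : -((Real.pi:ℂ) * Complex.I * ((n:ℂ) - m)) / n
      = -((Real.pi:ℂ) * Complex.I) + (Real.pi:ℂ) * Complex.I * m / n := by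
    field_simp; ring
  have e1 : Complex.exp (-((Real.pi:ℂ) * Complex.I)) = -1 := by
    rw [Complex.exp_neg, Complex.exp_pi_mul_I]; norm_num
  rw [h1, h2, Complex.exp_add, Complex.exp_add, Complex.exp_pi_mul_I, e1]
  rw [show -((Real.pi:ℂ)*Complex.I*m)/n = -((Real.pi:ℂ)*Complex.I*m/n) by ring]
  ring

lemma qnum_int_ne_zero (n : ℕ) (m : ℤ) (h1 : 0 < m) (h2 : m < n) :
    qnum n (m:ℂ) ≠ 0 := by
  have hnZ : (0:ℤ) < n := lt_trans h1 h2
  have hn : (n:ℂ) ≠ 0 := by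
    simp only [ne_eq, Nat.cast_eq_zero]; omega
  intro h
  unfold qnum at h
  rw [sub_eq_zero] at h
  rw [Complex.exp_eq_exp_iff_exists_int] at h
  obtain ⟨k, hk⟩ := h
  have hπ : (Real.pi:ℂ) ≠ 0 := by
    simp [Complex.ofReal_ne_zero, Real.pi_ne_zero]
  have hI := Complex.I_ne_zero
  have h2πI : (2:ℂ) * Real.pi * Complex.I ≠ 0 := by
    simp [hπ, hI]
  field_simp at hk
  have hm : ((2:ℂ) * Real.pi * Complex.I) * m = ((2:ℂ) * Real.pi * Complex.I) * ((k:ℂ) * n) := by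
    linear_combination ((Real.pi:ℂ) * Complex.I) * hk
  have hm2 : (m:ℂ) = (k:ℂ) * n := mul_left_cancel₀ h2πI hm
  have hmZ : m = k * n := by exact_mod_cast hm2
  rcases le_or_gt k 0 with hk0 | hk0
  · nlinarith
  · have : 1 ≤ k := hk0
    nlinarith

/-- The product `{L}{L+1}⋯{L+k-1}` of quantum numbers along an integer interval. -/
noncomputable def iprod (n : ℕ) (L : ℤ) (k : ℕ) : ℂ :=
  ∏ j ∈ Finset.range k, qnum n ((L : ℂ) + (j : ℕ))

lemma iprod_add (n : ℕ) (L : ℤ) (k l : ℕ) :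
    iprod n L (k + l) = iprod n L k * iprod n (L + k) l := by
  unfold iprod
  rw [Finset.prod_range_add]
  congr 1
  refine Finset.prod_congr rfl fun j _ => ?_
  congr 1
  push_cast
  ring

lemma iprod_reflect (n : ℕ) (hn : n ≠ 0) (L : ℤ) (k : ℕ) :
    iprod n L k = iprod n ((n:ℤ) - L - k + 1) k := by
  have hr := Finset.prod_range_reflect
    (fun j : ℕ => qnum n ((((n:ℤ) - L - k + 1 : ℤ) : ℂ) + (j:ℕ))) k
  unfold iprod
  rw [← hr]
  refine Finset.prod_congr rfl fun j hj => ?_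
  simp only [Finset.mem_range] at hj
  show qnum n (((L:ℤ):ℂ) + (j:ℕ))
      = qnum n ((((n:ℤ) - L - k + 1 : ℤ) : ℂ) + ((k - 1 - j : ℕ) : ℂ))
  have h1 : ((k - 1 - j : ℕ) : ℂ) = (k:ℂ) - 1 - (j:ℂ) := by
    have : ((k - 1 - j : ℕ) : ℤ) = (k:ℤ) - 1 - (j:ℤ) := by omega
    exact_mod_cast this
  rw [h1]
  rw [show (((n:ℤ) - L - k + 1 : ℤ) : ℂ) + ((k:ℂ) - 1 - (j:ℂ))
      = (n:ℂ) - (((L:ℤ):ℂ) + (j:ℂ)) by push_cast; ring]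
  exact (qnum_reflect n (by simpa using hn) _).symm

lemma iprod_ne_zero (n : ℕ) (L : ℤ) (k : ℕ) (h1 : 0 < L) (h2 : L + k ≤ n) :
    iprod n L k ≠ 0 := by
  unfold iprod
  rw [Finset.prod_ne_zero_iff]
  intro j hj
  simp only [Finset.mem_range] at hj
  have : ((L:ℤ):ℂ) + ((j:ℕ):ℂ) = (((L + j : ℤ)) : ℂ) := by push_cast; ring
  rw [this]
  exact qnum_int_ne_zero n (L + j) (by omega) (by omega)

lemma prod_desc (n k : ℕ) (x : ℂ) (L : ℤ) (h : (L:ℂ) = x - k + 1) :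
    ∏ j ∈ Finset.range k, qnum n (x - j) = iprod n L k := by
  have hr := Finset.prod_range_reflect (fun j : ℕ => qnum n (((L:ℤ):ℂ) + (j:ℕ))) k
  unfold iprod
  rw [← hr]
  refine Finset.prod_congr rfl fun j hj => ?_
  simp only [Finset.mem_range] at hj
  show qnum n (x - (j:ℕ)) = qnum n (((L:ℤ):ℂ) + ((k - 1 - j : ℕ) : ℂ))
  have h1 : ((k - 1 - j : ℕ) : ℂ) = (k:ℂ) - 1 - (j:ℂ) := by
    have : ((k - 1 - j : ℕ) : ℤ) = (k:ℤ) - 1 - (j:ℤ) := by omega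
    exact_mod_cast this
  rw [h1, h]
  congr 1
  ring

lemma qbinomZ_eq (n : ℕ) (a b : ℤ) (h : b ≤ a) :
    qbinomZ n a b = iprod n (b+1) (a-b).toNat / iprod n 1 (a-b).toNat := by
  unfold qbinomZ qbinom
  set k := (a-b).toNat with hk
  have hkZ : (k:ℤ) = a - b := Int.toNat_of_nonneg (by omega)
  have hkC : (k:ℂ) = (a:ℂ) - (b:ℂ) := by exact_mod_cast hkZ
  rw [Finset.prod_div_distrib]
  congr 1
  · exact prod_desc n k _ _ (by push_cast; rw [hkC]; ring)
  · exact prod_desc n k _ _ (by push_cast; ring)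

/-- the `b ↦ n-1-b` invariance of the other product of three quantum
binomials appearing in the proof of Lemma (Appendix B). -/
theorem qbinom_triple_bar_b' (n : ℕ) (hn : 2 ≤ n) (a b c d e f : ℤ)
    (habc : Admissible n a b c) (hcde : Admissible n c d e)
    (haef : Admissible n a e f) (hbdf : Admissible n b d f) (z : ℤ)
    (hs : max (max 0 ((n : ℤ) - 1 - 2 * e))
        (max ((d + f - b) - (d + e - c)) ((b + f - d) + (c + d - e) - ((n : ℤ) - 1))) ≤ z)
    (hS : z ≤ min (min (c + d - e) (a + f - e))
        (min ((n : ℤ) - 1 - (a + e - f)) ((n : ℤ) - 1 - (d + e - c)))) :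
    qbinomZ n (2 * c) (a + b + c + 1 - n) *
      qbinomZ n ((b + c - a) + (a + f - e) - z) (b + c - a) *
      qbinomZ n ((a + e - f) + z) (a + c - b) =
    qbinomZ n (2 * c) (a + ((n : ℤ) - 1 - b) + c + 1 - n) *
      qbinomZ n ((((n : ℤ) - 1 - b) + c - a) + (a + f - e) - z)
        (((n : ℤ) - 1 - b) + c - a) *
      qbinomZ n ((a + e - f) + z) (a + c - ((n : ℤ) - 1 - b)) := by
  obtain ⟨A1, A2, A3, A4, A5, A6, A7, A8, A9, A10, A11, A12, A13, A14⟩ := habc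
  obtain ⟨B1, B2, B3, B4, B5, B6, B7, B8, B9, B10, B11, B12, B13, B14⟩ := hcde
  obtain ⟨C1, C2, C3, C4, C5, C6, C7, C8, C9, C10, C11, C12, C13, C14⟩ := haef
  obtain ⟨D1, D2, D3, D4, D5, D6, D7, D8, D9, D10, D11, D12, D13, D14⟩ := hbdf
  simp only [max_le_iff, le_min_iff] at hs hS
  obtain ⟨⟨hs1, hs2⟩, hs3, hs4⟩ := hs
  obtain ⟨⟨hS1, hS2⟩, hS3, hS4⟩ := hS
  clear A1 A2 A3 A4 A5 A6 A7 A8 A13 A14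
  clear B1 B2 B3 B4 B5 B6 B7 B8 B9 B10 B11 B12 B13 B14
  clear C1 C2 C3 C4 C5 C6 C7 C11 C12 C13 C14
  clear D1 D2 D3 D4 D5 D6 D7 D8 D9 D10 D12 D14
  -- normalize the integer arguments of the six quantum binomials
  rw [show ((b + c - a) + (a + f - e) - z : ℤ) = b+c+f-e-z from by ring,
      show ((a + e - f) + z : ℤ) = a+e-f+z from by ring,
      show (a + ((n:ℤ) - 1 - b) + c + 1 - (n:ℤ) : ℤ) = a+c-b from by ring,
      show ((((n:ℤ) - 1 - b) + c - a) + (a + f - e) - z : ℤ) = (n:ℤ)+c+f-b-e-z-1 from by ring,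
      show (((n:ℤ) - 1 - b) + c - a : ℤ) = (n:ℤ)+c-a-b-1 from by ring,
      show (a + c - ((n:ℤ) - 1 - b) : ℤ) = a+b+c+1-(n:ℤ) from by ring]
  rw [qbinomZ_eq n (2*c) (a+b+c+1-(n:ℤ)) (by omega),
      qbinomZ_eq n (b+c+f-e-z) (b+c-a) (by omega),
      qbinomZ_eq n (a+e-f+z) (a+c-b) (by omega),
      qbinomZ_eq n (2*c) (a+c-b) (by omega),
      qbinomZ_eq n ((n:ℤ)+c+f-b-e-z-1) ((n:ℤ)+c-a-b-1) (by omega),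
      qbinomZ_eq n (a+e-f+z) (a+b+c+1-(n:ℤ)) (by omega)]
  -- normalize the lengths
  rw [show (2*c - (a+b+c+1-(n:ℤ))).toNat = ((n:ℤ)-1-a-b+c).toNat from by omega,
      show ((b+c+f-e-z) - (b+c-a)).toNat = ((a:ℤ)+f-e-z).toNat from by omega,
      show ((a+e-f+z) - (a+c-b)).toNat = ((b:ℤ)+e-c-f+z).toNat from by omega,
      show (2*c - (a+c-b)).toNat = ((b:ℤ)+c-a).toNat from by omega,
      show (((n:ℤ)+c+f-b-e-z-1) - ((n:ℤ)+c-a-b-1)).toNat = ((a:ℤ)+f-e-z).toNat from by omega,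
      show ((a+e-f+z) - (a+b+c+1-(n:ℤ))).toNat = ((n:ℤ)-1-b-c-f+e+z).toNat from by omega]
  set k1 : ℕ := ((n:ℤ)-1-a-b+c).toNat with hk1
  set k2 : ℕ := ((a:ℤ)+f-e-z).toNat with hk2
  set k3 : ℕ := ((b:ℤ)+e-c-f+z).toNat with hk3
  set K1 : ℕ := ((b:ℤ)+c-a).toNat with hK1
  set K3 : ℕ := ((n:ℤ)-1-b-c-f+e+z).toNat with hK3
  have hnz : n ≠ 0 := by omega
  -- nonvanishing of the denominators
  have hd1 : iprod n 1 k1 ≠ 0 := iprod_ne_zero n 1 k1 (by norm_num) (by omega)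
  have hd2 : iprod n 1 k2 ≠ 0 := iprod_ne_zero n 1 k2 (by norm_num) (by omega)
  have hd3 : iprod n 1 k3 ≠ 0 := iprod_ne_zero n 1 k3 (by norm_num) (by omega)
  have hD1 : iprod n 1 K1 ≠ 0 := iprod_ne_zero n 1 K1 (by norm_num) (by omega)
  have hD3 : iprod n 1 K3 ≠ 0 := iprod_ne_zero n 1 K3 (by norm_num) (by omega)
  -- reflection identities
  have r1 : iprod n 1 k1 = iprod n (a+b-c+1) k1 := by
    rw [iprod_reflect n hnz 1 k1]; congr 1; omega
  have r2 : iprod n ((n:ℤ)+c-a-b-1+1) k2 = iprod n ((k3:ℤ)+1) k2 := by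
    rw [iprod_reflect n hnz ((n:ℤ)+c-a-b-1+1) k2]; congr 1; omega
  have r3 : iprod n 1 K3 = iprod n ((K1:ℤ)+(k2:ℤ)+1) K3 := by
    rw [iprod_reflect n hnz 1 K3]; congr 1; omega
  -- the key interval-swap identity
  have key : iprod n (a+b+c+1-(n:ℤ)+1) k1 * iprod n (a+c-b+1) k3
      = iprod n (a+c-b+1) K1 * iprod n (a+b+c+1-(n:ℤ)+1) K3 := by
    rcases le_or_gt (2*b) ((n:ℤ)-1) with h | h
    · set dd : ℕ := ((n:ℤ)-1-2*b).toNat with hdd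
      rw [show k1 = dd + K1 from by omega, show K3 = dd + k3 from by omega,
          iprod_add, iprod_add,
          show (a+b+c+1-(n:ℤ)+1+(dd:ℤ)) = a+c-b+1 from by omega]
      ring
    · set dd : ℕ := (2*b-((n:ℤ)-1)).toNat with hdd
      rw [show K1 = dd + k1 from by omega, show k3 = dd + K3 from by omega,
          iprod_add, iprod_add,
          show (a+c-b+1+(dd:ℤ)) = a+b+c+1-(n:ℤ)+1 from by omega]
      ring
  -- concatenations to the full interval [1, n-1]
  have cL : iprod n 1 K1 * iprod n (b+c-a+1) k2 * iprod n ((K1:ℤ)+(k2:ℤ)+1) K3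
      = iprod n 1 (K1+k2+K3) := by
    rw [iprod_add, iprod_add,
        show ((1:ℤ)+(K1:ℤ)) = b+c-a+1 from by omega,
        show ((1:ℤ)+((K1+k2:ℕ):ℤ)) = (K1:ℤ)+(k2:ℤ)+1 from by push_cast; ring]
  have cR : iprod n 1 k3 * iprod n ((k3:ℤ)+1) k2 * iprod n (a+b-c+1) k1
      = iprod n 1 (k3+k2+k1) := by
    rw [iprod_add, iprod_add,
        show ((1:ℤ)+(k3:ℤ)) = (k3:ℤ)+1 from by ring,
        show ((1:ℤ)+((k3+k2:ℕ):ℤ)) = a+b-c+1 from by omega]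
  have hNN : iprod n 1 (K1+k2+K3) = iprod n 1 (k3+k2+k1) := by
    congr 1; omega
  rw [div_mul_div_comm, div_mul_div_comm, div_mul_div_comm, div_mul_div_comm]
  rw [div_eq_div_iff (by exact mul_ne_zero (mul_ne_zero hd1 hd2) hd3)
      (by exact mul_ne_zero (mul_ne_zero hD1 hd2) hD3)]
  rw [r1, r2, r3]
  linear_combination
    (iprod n (a+b+c+1-(n:ℤ)+1) k1 * iprod n (a+c-b+1) k3 * iprod n 1 k2) * cL
    - (iprod n (a+c-b+1) K1 * iprod n (a+b+c+1-(n:ℤ)+1) K3 * iprod n 1 k2) * cR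
    + (iprod n 1 (k3+k2+k1) * iprod n 1 k2) * key
    + (iprod n (a+b+c+1-(n:ℤ)+1) k1 * iprod n (a+c-b+1) k3 * iprod n 1 k2) * hNN
end

section
/- Let a, b, c, d, e, f be integers such that the four triples (a,b,c), (c,d,e), (a,e,f), (b,d,f) are admissible, set s := max(0, n−1−2e, (d+f−b)−(d+e−c), (b+f−d)+(c+d−e)−(n−1)) and S := min(c+d−e, a+f−e, n−1−(a+e−f), n−1−(d+e−c)), and let z be an integer with s ≤ z ≤ S. Then each of the four quantum binomials [a+e+f+1−n; 2e+z+1−n], [a+e−f+z; a+e−f], [(b+f−d)+(c+d−e)−z; b+f−d], [(d+e−c)+z; d+f−b] is defined (the difference of its two entries lies in {0, 1, …, n−1}) and is nonzero. -/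
lemma qnum_ne_zero' (n : ℕ) (m : ℤ) (h1 : 0 < m) (h2 : m < (n : ℤ)) :
    qnum n (m : ℂ) ≠ 0 := by
  have hn0 : 0 < n := by exact_mod_cast h1.trans h2
  have hn : (n : ℂ) ≠ 0 := by exact_mod_cast hn0.ne'
  have hpi : (Real.pi : ℂ) ≠ 0 := by exact_mod_cast Real.pi_ne_zero
  unfold qnum
  rw [sub_ne_zero]
  intro h
  rw [Complex.exp_eq_exp_iff_exists_int] at h
  obtain ⟨k, hk⟩ := h
  have hmc : (m : ℂ) = k * n := by
    field_simp at hk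
    have := Complex.I_ne_zero
    -- hk : π * I * m * 2 = k * (2 * π * I) * n (or similar); solve linearly
    apply mul_left_cancel₀ (mul_ne_zero hpi Complex.I_ne_zero)
    linear_combination ((Real.pi : ℂ) * Complex.I / 2) * hk
  have hm : m = k * n := by exact_mod_cast hmc
  have hn' : (0:ℤ) < n := by exact_mod_cast hn0
  rcases lt_trichotomy k 0 with hkk | hkk | hkk
  · nlinarith
  · subst hkk; simp at hm; omega
  · nlinarith

lemma qbinomZ_ne_zero' (n : ℕ) (a b : ℤ) (hb : 0 ≤ b) (hba : b ≤ a)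
    (han : a ≤ (n : ℤ) - 1) : qbinomZ n a b ≠ 0 := by
  unfold qbinomZ qbinom
  rw [Finset.prod_ne_zero_iff]
  intro j hj
  rw [Finset.mem_range] at hj
  have hk : ((a - b).toNat : ℤ) = a - b := Int.toNat_of_nonneg (by omega)
  have hjk : (j : ℤ) < a - b := by omega
  apply div_ne_zero
  · have : ((a : ℂ) - j) = ((a - j : ℤ) : ℂ) := by push_cast; ring
    rw [this]
    exact qnum_ne_zero' n _ (by omega) (by omega)
  · have hkc : (((a - b).toNat : ℕ) : ℂ) = (a : ℂ) - b := by
      have h2 := congrArg (Int.cast : ℤ → ℂ) hk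
      push_cast at h2
      exact h2
    have : (((a - b).toNat : ℂ) - j) = ((a - b - j : ℤ) : ℂ) := by
      rw [hkc]; push_cast; ring
    rw [this]
    exact qnum_ne_zero' n _ (by omega) (by omega)

/-- for `s ≤ z ≤ S`, each of the four quantum binomials in the summand
of the deformed 6j-symbol formula is defined (difference of entries in `{0,…,n-1}`)
and nonzero. -/
theorem tet6j_summand_binomials_defined_ne_zero (n : ℕ) (hn : 2 ≤ n) (a b c d e f : ℤ)
    (habc : Admissible n a b c) (hcde : Admissible n c d e)
    (haef : Admissible n a e f) (hbdf : Admissible n b d f) (z : ℤ)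
    (hs : max (max 0 ((n : ℤ) - 1 - 2 * e))
        (max ((d + f - b) - (d + e - c)) ((b + f - d) + (c + d - e) - ((n : ℤ) - 1))) ≤ z)
    (hS : z ≤ min (min (c + d - e) (a + f - e))
        (min ((n : ℤ) - 1 - (a + e - f)) ((n : ℤ) - 1 - (d + e - c)))) :
    (0 ≤ (a + e + f + 1 - n) - (2 * e + z + 1 - n) ∧
      (a + e + f + 1 - n) - (2 * e + z + 1 - n) ≤ (n : ℤ) - 1 ∧
      qbinomZ n (a + e + f + 1 - n) (2 * e + z + 1 - n) ≠ 0) ∧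
    (0 ≤ (a + e - f + z) - (a + e - f) ∧
      (a + e - f + z) - (a + e - f) ≤ (n : ℤ) - 1 ∧
      qbinomZ n (a + e - f + z) (a + e - f) ≠ 0) ∧
    (0 ≤ ((b + f - d) + (c + d - e) - z) - (b + f - d) ∧
      ((b + f - d) + (c + d - e) - z) - (b + f - d) ≤ (n : ℤ) - 1 ∧
      qbinomZ n ((b + f - d) + (c + d - e) - z) (b + f - d) ≠ 0) ∧
    (0 ≤ ((d + e - c) + z) - (d + f - b) ∧
      ((d + e - c) + z) - (d + f - b) ≤ (n : ℤ) - 1 ∧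
      qbinomZ n ((d + e - c) + z) (d + f - b) ≠ 0) := by
  obtain ⟨h1, h2, h3, h4, h5, h6, h7, h8, h9, h10, h11, h12, h13, h14⟩ := habc
  obtain ⟨g1, g2, g3, g4, g5, g6, g7, g8, g9, g10, g11, g12, g13, g14⟩ := hcde
  obtain ⟨i1, i2, i3, i4, i5, i6, i7, i8, i9, i10, i11, i12, i13, i14⟩ := haef
  obtain ⟨j1, j2, j3, j4, j5, j6, j7, j8, j9, j10, j11, j12, j13, j14⟩ := hbdf
  simp only [max_le_iff, le_min_iff] at hs hS
  refine ⟨⟨by omega, by omega, qbinomZ_ne_zero' n _ _ (by omega) (by omega) (by omega)⟩,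
    ⟨by omega, by omega, qbinomZ_ne_zero' n _ _ (by omega) (by omega) (by omega)⟩,
    ⟨by omega, by omega, qbinomZ_ne_zero' n _ _ (by omega) (by omega) (by omega)⟩,
    ⟨by omega, by omega, qbinomZ_ne_zero' n _ _ (by omega) (by omega) (by omega)⟩⟩
end
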